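/- Let n be a positive integer, a = (a_1,...,a_n) and b = (b_1,...,b_n) be n-tuples of complex numbers with b_k ≠ 0 for all k, and p = (p_1,...,p_n) nonnegative real weights with ∑_{i=1}^n p_i = 1. Let γ, Γ ∈ ℂ satisfy Re(Γ · conj(γ)) = 0 and Γ ≠ γ, and suppose |a_k/conj(b_k) - (γ + Γ)/2| ≤ (1/2)|Γ - γ| for every k ∈ {1,...,n}. Then ∑_{k=1}^n p_k |a_k|^2 ≤ Re[ (conj(γ) + conj(Γ)) ∑_{k=1}^n p_k a_k b_k ] ≤ |Γ + γ| · | ∑_{k=1}^n p_k a_k b_k |. -/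

import Mathlib

theorem stmt_9 (n : ℕ) (hn : 0 < n) (a b : Fin n → ℂ) (p : Fin n → ℝ)
    (hb : ∀ k, b k ≠ 0) (hp : ∀ k, 0 ≤ p k) (hp1 : ∑ i, p i = 1)
    (γ Γ : ℂ) (hΓγ : (Γ * (starRingEnd ℂ) γ).re = 0) (hne : Γ ≠ γ)
    (h : ∀ k, ‖a k / (starRingEnd ℂ) (b k) - (γ + Γ) / 2‖
        ≤ (1 / 2) * ‖Γ - γ‖) :
    ∑ k, p k * ‖a k‖ ^ 2
      ≤ (((starRingEnd ℂ) γ + (starRingEnd ℂ) Γ) * ∑ k, (p k : ℂ) * a k * b k).re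
    ∧ (((starRingEnd ℂ) γ + (starRingEnd ℂ) Γ) * ∑ k, (p k : ℂ) * a k * b k).re
      ≤ ‖Γ + γ‖ * ‖∑ k, (p k : ℂ) * a k * b k‖ := by
  set w : ℂ := (starRingEnd ℂ) γ + (starRingEnd ℂ) Γ with hw
  have key : ∀ k, ‖a k‖ ^ 2 ≤ (w * (a k * b k)).re := by
    intro k
    have hbk : (starRingEnd ℂ) (b k) ≠ 0 := by simpa using hb k
    set z : ℂ := a k / (starRingEnd ℂ) (b k) with hzdef
    have ha : a k = z * (starRingEnd ℂ) (b k) := by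
      rw [hzdef, div_mul_cancel₀ _ hbk]
    have hsq : Complex.normSq (z - (γ + Γ)/2) ≤ (1/4) * Complex.normSq (Γ - γ) := by
      have h1 := h k
      have h2 := mul_self_le_mul_self (norm_nonneg _) h1
      nlinarith [Complex.sq_norm (z - (γ+Γ)/2), Complex.sq_norm (Γ - γ),
        norm_nonneg (Γ - γ)]
    have hz2 : Complex.normSq z ≤ (z * w).re := by
      simp only [Complex.normSq_apply, Complex.mul_re, Complex.sub_re, Complex.sub_im,
        Complex.add_re, Complex.add_im, Complex.conj_re, Complex.conj_im, Complex.div_re,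
        Complex.div_im, Complex.mul_im, hw] at hsq hΓγ ⊢
      norm_num at hsq
      nlinarith [hsq, hΓγ]
    have hnsb : (0:ℝ) ≤ Complex.normSq (b k) := Complex.normSq_nonneg _
    have habk : ‖a k‖ ^ 2 = Complex.normSq z * Complex.normSq (b k) := by
      rw [ha, Complex.sq_norm, Complex.normSq_mul, Complex.normSq_conj]
    have hre : (w * (a k * b k)).re = (z * w).re * Complex.normSq (b k) := by
      have : w * (a k * b k) = (z * w) * ((Complex.normSq (b k) : ℝ) : ℂ) := by
        have hbb : (starRingEnd ℂ) (b k) * b k = (Complex.normSq (b k) : ℝ) := by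
          rw [mul_comm, Complex.mul_conj]
        rw [ha]
        linear_combination (w * z) * hbb
      rw [this]
      simp [Complex.mul_re]
    rw [habk, hre]
    exact mul_le_mul_of_nonneg_right hz2 hnsb
  constructor
  · have hrw : (w * ∑ k, (p k : ℂ) * a k * b k).re
        = ∑ k, p k * (w * (a k * b k)).re := by
      rw [Finset.mul_sum, Complex.re_sum]
      congr 1; ext k
      have : w * ((p k : ℂ) * a k * b k) = (p k : ℂ) * (w * (a k * b k)) := by ring
      rw [this, Complex.re_ofReal_mul]
    rw [hrw]
    apply Finset.sum_le_sum
    intro k _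
    exact mul_le_mul_of_nonneg_left (key k) (hp k)
  · calc (w * ∑ k, (p k : ℂ) * a k * b k).re
        ≤ ‖w * ∑ k, (p k : ℂ) * a k * b k‖ := Complex.re_le_norm _
      _ = ‖w‖ * ‖∑ k, (p k : ℂ) * a k * b k‖ := norm_mul _ _
      _ = ‖Γ + γ‖ * ‖∑ k, (p k : ℂ) * a k * b k‖ := by
          congr 1
          rw [hw, ← map_add, Complex.norm_conj, add_comm]
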